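/- For a rigid body translating at constant velocity (u0, v0) with no rotation in a uniform flow of the same velocity, the swept quantity for a face F is Δw_F^n = (Δt S_F / (ΔxΔy))(u0 n_F^x + v0 n_F^y) w_0, and combining with the GCL relations the total cut-cell increment vanishes: (1-α_C^{n+1})Δw_C = 0 for every cell. -/

import Mathlib

/-- Steady constant flow with a rigid body translating at the same constant velocity
`(u₀, v₀)` with no rotation: the swept quantity of a face `F` is
`Δw_F = (Δt S_F/(ΔxΔy))(u₀ n_F^x + v₀ n_F^y) w₀`, and combining with the GCL relations,
the total cut-cell increment of the Embedded Boundary update vanishes: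
`(1-α_C^{n+1}) Δw_C = 0` in every cell. -/
theorem uniform_motion_preserved (ι : Type*) [Fintype ι]
    (ρ0 u0 v0 p0 E0 Δt Δx Δy : ℝ) (hΔx : 0 < Δx) (hΔy : 0 < Δy)
    (S nx ny : ι → ℝ)
    (κl κr κb κt : ℝ)
    (hGCLx : κl = κr + ∑ F, (S F / Δy) * nx F)
    (hGCLy : κb = κt + ∑ F, (S F / Δx) * ny F)
    (w0 fl fr fb ft : Fin 4 → ℝ)
    (hw0 : w0 = ![ρ0, ρ0 * u0, ρ0 * v0, ρ0 * E0])
    (hfl : fl = ![ρ0 * u0, ρ0 * u0 ^ 2 + p0, ρ0 * u0 * v0, (ρ0 * E0 + p0) * u0])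
    (hfr : fr = fl)
    (hfb : fb = ![ρ0 * v0, ρ0 * u0 * v0, ρ0 * v0 ^ 2 + p0, (ρ0 * E0 + p0) * v0])
    (hft : ft = fb)
    -- wall flux with `p̄_x = p̄_y = p₀` and `V_F^{n+1/2} = (u₀, v₀)`
    (fF : ι → Fin 4 → ℝ)
    (hfF : ∀ F, fF F = ![0, p0 * nx F, p0 * ny F, p0 * (u0 * nx F + v0 * ny F)])
    -- swept quantities
    (ΔwF : ι → Fin 4 → ℝ)
    (hΔwF : ∀ F, ΔwF F = (((Δt * S F) / (Δx * Δy)) * (u0 * nx F + v0 * ny F)) • w0) :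
    Δt • (((1 - κl) / Δx) • fl - ((1 - κr) / Δx) • fr
        + ((1 - κb) / Δy) • fb - ((1 - κt) / Δy) • ft)
      + (Δt / (Δx * Δy)) • ∑ F, S F • fF F
      + ∑ F, ΔwF F = 0 := by
  have hx := hΔx.ne'
  have hy := hΔy.ne'
  have h1 : ((1 - κl) / Δx) • fl - ((1 - κr) / Δx) • fr
      = ∑ F, (-(S F / Δy * nx F) / Δx) • fl := by
    rw [hfr, ← sub_smul, ← Finset.sum_smul]
    congr 1
    rw [hGCLx]
    simp only [neg_div, Finset.sum_neg_distrib, ← Finset.sum_div]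
    ring
  have h2 : ((1 - κb) / Δy) • fb - ((1 - κt) / Δy) • ft
      = ∑ F, (-(S F / Δx * ny F) / Δy) • fb := by
    rw [hft, ← sub_smul, ← Finset.sum_smul]
    congr 1
    rw [hGCLy]
    simp only [neg_div, Finset.sum_neg_distrib, ← Finset.sum_div]
    ring
  rw [show ((1 - κl) / Δx) • fl - ((1 - κr) / Δx) • fr
        + ((1 - κb) / Δy) • fb - ((1 - κt) / Δy) • ft
      = (((1 - κl) / Δx) • fl - ((1 - κr) / Δx) • fr)
        + (((1 - κb) / Δy) • fb - ((1 - κt) / Δy) • ft) by abel,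
    h1, h2, ← Finset.sum_add_distrib, Finset.smul_sum, Finset.smul_sum,
    ← Finset.sum_add_distrib, ← Finset.sum_add_distrib]
  apply Finset.sum_eq_zero
  intro F _
  rw [hΔwF, hfF, hw0, hfl, hfb]
  funext i
  fin_cases i <;>
    · simp only [Pi.add_apply, Pi.smul_apply, smul_eq_mul, Pi.zero_apply,
        Matrix.cons_val_zero, Matrix.cons_val_one, Matrix.head_cons,
        Matrix.cons_val_two, Matrix.tail_cons, Matrix.cons_val_three,
        Matrix.cons_val_fin_one, Fin.isValue, Matrix.cons_val', Fin.reduceFinMk]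
      field_simp
      ring
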